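/- Reduced contraction descends to the Karoubi–de Rham complex: for fixed Θ ∈ Der_R(A,A⊗A), the reduced contraction ι_Θ(ω) := (i_Θ ω)^◇ ∈ Ω^{n-1}_R A (where (α⊗β)^◇ := (−1)^{deg α·deg β} βα) depends only on the image of ω ∈ Ω^n_R A in DR^n_R A; moreover, for fixed ω, the map Θ ↦ ι_Θ ω is an A-bimodule morphism Der_R(A,A⊗A) → Ω^{n-1}_R A with respect to the inner bimodule structure. -/

import Mathlib

open TensorProduct

section StmtAux

variable {k W : Type*} [Field k] [Ring W] [Algebra k W]

/-- Span of homogeneous pure tensors of total degree `p - 1` (so `stmt11Tp 𝒜 0 = ⊥`). -/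
def stmt11Tp (𝒜 : ℕ → Submodule k W) (p : ℕ) : Submodule k (W ⊗[k] W) :=
  Submodule.span k
    {t | ∃ i j z₁ z₂, i + j + 1 = p ∧ z₁ ∈ 𝒜 i ∧ z₂ ∈ 𝒜 j ∧ t = z₁ ⊗ₜ[k] z₂}

lemma stmt11Tp_mul_right (𝒜 : ℕ → Submodule k W) [GradedAlgebra 𝒜]
    {p : ℕ} {t : W ⊗[k] W} (ht : t ∈ stmt11Tp 𝒜 p) {q : ℕ} {y : W} (hy : y ∈ 𝒜 q) :
    t * ((1 : W) ⊗ₜ[k] y) ∈ stmt11Tp 𝒜 (p + q) := by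
  refine Submodule.span_induction ?_ ?_ ?_ ?_ ht
  · rintro x ⟨i, j, z₁, z₂, hij, h1, h2, rfl⟩
    apply Submodule.subset_span
    refine ⟨i, j + q, z₁, z₂ * y, by omega, h1, SetLike.mul_mem_graded h2 hy, ?_⟩
    rw [Algebra.TensorProduct.tmul_mul_tmul, mul_one]
  · simp [zero_mul]
  · intro a b _ _ ha hb
    rw [add_mul]; exact add_mem ha hb
  · intro r a _ ha
    rw [smul_mul_assoc]; exact Submodule.smul_mem _ r ha

lemma stmt11Tp_mul_left (𝒜 : ℕ → Submodule k W) [GradedAlgebra 𝒜]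
    {q : ℕ} {x : W} (hx : x ∈ 𝒜 q) {p : ℕ} {t : W ⊗[k] W} (ht : t ∈ stmt11Tp 𝒜 p) :
    (x ⊗ₜ[k] (1 : W)) * t ∈ stmt11Tp 𝒜 (q + p) := by
  refine Submodule.span_induction ?_ ?_ ?_ ?_ ht
  · rintro w ⟨i, j, z₁, z₂, hij, h1, h2, rfl⟩
    apply Submodule.subset_span
    refine ⟨q + i, j, x * z₁, z₂, by omega, SetLike.mul_mem_graded hx h1, h2, ?_⟩
    rw [Algebra.TensorProduct.tmul_mul_tmul, one_mul]
  · simp [mul_zero]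
  · intro a b _ _ ha hb
    rw [mul_add]; exact add_mem ha hb
  · intro r a _ ha
    rw [mul_smul_comm]; exact Submodule.smul_mem _ r ha

lemma stmt11_sign (i j q : ℕ) :
    ((-1 : k) ^ ((i + j + 1) * q) * ((-1 : k) ^ q * (-1 : k) ^ ((q + i) * j)))
      = (-1 : k) ^ (i * (j + q)) := by
  rw [← pow_add, ← pow_add]
  have h : (i + j + 1) * q + (q + (q + i) * j) = i * (j + q) + 2 * (q * (1 + j)) := by ring
  rw [h, pow_add, pow_mul (-1 : k) 2, neg_one_sq, one_pow, mul_one]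

/-- The key contraction-rotation identity on the span of homogeneous tensors. -/
lemma stmt11L (𝒜 : ℕ → Submodule k W) [GradedAlgebra 𝒜]
    (dia : W ⊗[k] W →ₗ[k] W) (σ : W →ₗ[k] W)
    (hσ : ∀ (n : ℕ), ∀ w ∈ 𝒜 n, σ w = ((-1 : k) ^ n) • w)
    (hdia : ∀ (p q : ℕ), ∀ x ∈ 𝒜 p, ∀ y ∈ 𝒜 q,
        dia (x ⊗ₜ[k] y) = ((-1 : k) ^ (p * q)) • (y * x))
    {p : ℕ} {t : W ⊗[k] W} (ht : t ∈ stmt11Tp 𝒜 p) {q : ℕ} {y : W} (hy : y ∈ 𝒜 q) :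
    dia (t * ((1 : W) ⊗ₜ[k] y)) = ((-1 : k) ^ (p * q)) • dia ((σ y ⊗ₜ[k] (1 : W)) * t) := by
  refine Submodule.span_induction ?_ ?_ ?_ ?_ ht
  · rintro w ⟨i, j, z₁, z₂, hij, h1, h2, rfl⟩
    rw [Algebra.TensorProduct.tmul_mul_tmul, mul_one,
      hdia i (j + q) z₁ h1 (z₂ * y) (SetLike.mul_mem_graded h2 hy),
      hσ q y hy, ← TensorProduct.smul_tmul', smul_mul_assoc, map_smul,
      Algebra.TensorProduct.tmul_mul_tmul, one_mul,
      hdia (q + i) j (y * z₁) (SetLike.mul_mem_graded hy h1) z₂ h2]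
    rw [smul_smul, smul_smul, mul_assoc ((-1 : k) ^ (p * q)), ← hij, stmt11_sign,
      mul_assoc z₂ y z₁]
  · simp
  · intro a b _ _ ha hb
    rw [add_mul, mul_add, map_add, map_add, ha, hb, smul_add]
  · intro r a _ ha
    rw [smul_mul_assoc, mul_smul_comm, map_smul, map_smul, ha, smul_comm]

lemma stmt11_bimod {S : Type*} [Ring S] (c b y s P Q : S)
    (h1 : b * y = y * b) (h2 : s * c = c * s) :
    c * P * b * y + s * (c * Q * b) = c * (P * y + s * Q) * b := by
  rw [mul_add, add_mul]
  congr 1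
  · rw [mul_assoc (c * P) b y, h1, ← mul_assoc (c * P) y b, mul_assoc c P y]
  · rw [← mul_assoc, ← mul_assoc, h2, mul_assoc c s Q]

end StmtAux

/-- For fixed `Θ ∈ Der_R(A, A ⊗ A)`, the reduced contraction
`ι_Θ(ω) = (i_Θ ω)^◇ ∈ Ω^{n-1}_R A` depends only on the image of `ω ∈ Ω^n_R A` in the
Karoubi–de Rham space `DR^n_R A = Ω^n/[Ω,Ω]_super`, i.e. `ι_Θ` kills super-commutators:
`ι_Θ(αβ) = (-1)^{|α||β|} ι_Θ(βα)`.  Moreover, for fixed `ω`, the assignment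
`Θ ↦ ι_Θ ω` is a morphism of `A`-bimodules with respect to the inner bimodule
structure: `ι_{c·Θ·b}(ω) = c · (ι_Θ ω) · b`. -/
theorem stmt11 (k R A W : Type*) [Field k] [CharZero k]
    [Ring R] [Algebra k R] [FiniteDimensional k R] [IsSemisimpleRing R]
    [Ring A] [Algebra k A] (f : R →ₐ[k] A)
    [Ring W] [Algebra k W]
    (𝒜 : ℕ → Submodule k W) [GradedAlgebra 𝒜]
    (ιA : A →ₐ[k] W) (d σ : W →ₗ[k] W)
    (hι0 : ∀ a : A, ιA a ∈ 𝒜 0)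
    (hdg : ∀ (n : ℕ), ∀ w ∈ 𝒜 n, d w ∈ 𝒜 (n + 1))
    (hσ : ∀ (n : ℕ), ∀ w ∈ 𝒜 n, σ w = ((-1 : k) ^ n) • w)
    (hdd : ∀ w : W, d (d w) = 0)
    (hdLeib : ∀ x y : W, d (x * y) = d x * y + σ x * d y)
    (hdR : ∀ r : R, d (ιA (f r)) = 0)
    (hgen : Algebra.adjoin k
        (Set.range (fun a : A => ιA a) ∪ Set.range (fun a : A => d (ιA a))) = ⊤)
    (dia : W ⊗[k] W →ₗ[k] W)
    (hdia : ∀ (p q : ℕ), ∀ x ∈ 𝒜 p, ∀ y ∈ 𝒜 q,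
        dia (x ⊗ₜ[k] y) = ((-1 : k) ^ (p * q)) • (y * x))
    -- the double derivation Θ and its contraction
    (Θ : A →ₗ[k] A ⊗[k] A)
    (hΘder : ∀ x y : A, Θ (x * y) = (x ⊗ₜ[k] (1 : A)) * Θ y + Θ x * ((1 : A) ⊗ₜ[k] y))
    (hΘR : ∀ r : R, Θ (f r) = 0)
    (iΘ : W →ₗ[k] W ⊗[k] W)
    (hiΘ0 : ∀ a : A, iΘ (ιA a) = 0)
    (hiΘd : ∀ a : A, iΘ (d (ιA a)) = TensorProduct.map ιA.toLinearMap ιA.toLinearMap (Θ a))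
    (hiΘL : ∀ x y : W,
        iΘ (x * y) = iΘ x * ((1 : W) ⊗ₜ[k] y) + (σ x ⊗ₜ[k] (1 : W)) * iΘ y) :
    -- (i) ι_Θ descends to the Karoubi–de Rham complex
    (∀ (p q : ℕ) (x y : W), x ∈ 𝒜 p → y ∈ 𝒜 q →
      dia (iΘ (x * y)) = ((-1 : k) ^ (p * q)) • dia (iΘ (y * x)))
    -- (ii) Θ ↦ ι_Θ ω is a morphism for the inner bimodule structure:
    --      ι_{c·Θ·b} ω = c · (ι_Θ ω) · b
    ∧ (∀ (c b : A) (Θ₂ : A →ₗ[k] A ⊗[k] A),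
        (∀ x : A, Θ₂ x = ((1 : A) ⊗ₜ[k] c) * Θ x * (b ⊗ₜ[k] (1 : A))) →
        ∀ iΘ₂ : W →ₗ[k] W ⊗[k] W,
          (∀ a : A, iΘ₂ (ιA a) = 0) →
          (∀ a : A,
            iΘ₂ (d (ιA a)) = TensorProduct.map ιA.toLinearMap ιA.toLinearMap (Θ₂ a)) →
          (∀ x y : W,
            iΘ₂ (x * y) = iΘ₂ x * ((1 : W) ⊗ₜ[k] y) + (σ x ⊗ₜ[k] (1 : W)) * iΘ₂ y) →
          ∀ ω : W, dia (iΘ₂ ω) = ιA c * dia (iΘ ω) * ιA b) := by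
  classical
  have hone : (1 : W) ∈ 𝒜 0 := SetLike.one_mem_graded 𝒜
  -- iΘ of a homogeneous element of degree p lands in `stmt11Tp 𝒜 p`
  have hN : ∀ p : ℕ, ∀ x ∈ 𝒜 p, iΘ x ∈ stmt11Tp 𝒜 p := by
    set N : ℕ → Submodule k W :=
      fun p => 𝒜 p ⊓ Submodule.comap iΘ (stmt11Tp 𝒜 p) with hNdef
    have hmemN : ∀ (p : ℕ) (x : W), x ∈ 𝒜 p → iΘ x ∈ stmt11Tp 𝒜 p → x ∈ N p := by
      intro p x h1 h2
      exact Submodule.mem_inf.mpr ⟨h1, h2⟩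
    have hmemN' : ∀ (p : ℕ) (x : W), x ∈ N p → x ∈ 𝒜 p ∧ iΘ x ∈ stmt11Tp 𝒜 p := by
      intro p x h
      exact Submodule.mem_inf.mp h
    have hΘ1 : iΘ (1 : W) = 0 := by rw [← map_one ιA]; exact hiΘ0 1
    have hmulN : ∀ i : ℕ, ∀ x ∈ N i, ∀ j : ℕ, ∀ y ∈ N j, x * y ∈ N (i + j) := by
      intro i x hx j y hy
      obtain ⟨hx1, hx2⟩ := hmemN' i x hx
      obtain ⟨hy1, hy2⟩ := hmemN' j y hy
      refine hmemN _ _ (SetLike.mul_mem_graded hx1 hy1) ?_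
      rw [hiΘL x y]
      refine add_mem (stmt11Tp_mul_right 𝒜 hx2 hy1) ?_
      rw [hσ i x hx1, ← TensorProduct.smul_tmul', smul_mul_assoc]
      exact Submodule.smul_mem _ _ (stmt11Tp_mul_left 𝒜 hx1 hy2)
    have hNtop : (⨆ p, N p) = ⊤ := by
      rw [eq_top_iff]
      intro x _
      have hx : x ∈ Algebra.adjoin k
          (Set.range (fun a : A => ιA a) ∪ Set.range (fun a : A => d (ιA a))) := by
        rw [hgen]; trivial
      refine Algebra.adjoin_induction (p := fun x _ => x ∈ ⨆ p, N p) ?_ ?_ ?_ ?_ hx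
      · rintro w (⟨a, rfl⟩ | ⟨a, rfl⟩)
        · refine Submodule.mem_iSup_of_mem 0 (hmemN 0 _ (hι0 a) ?_)
          rw [hiΘ0 a]; exact zero_mem _
        · refine Submodule.mem_iSup_of_mem 1
            (hmemN 1 _ (by simpa using hdg 0 _ (hι0 a)) ?_)
          rw [hiΘd a]
          induction Θ a using TensorProduct.induction_on with
          | zero => rw [map_zero]; exact zero_mem _
          | tmul a₁ a₂ =>
            rw [TensorProduct.map_tmul]
            exact Submodule.subset_span ⟨0, 0, _, _, rfl, hι0 a₁, hι0 a₂, rfl⟩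
          | add u v hu hv => rw [map_add]; exact add_mem hu hv
      · intro r
        rw [Algebra.algebraMap_eq_smul_one]
        refine Submodule.smul_mem _ _ (Submodule.mem_iSup_of_mem 0 (hmemN 0 _ hone ?_))
        rw [hΘ1]; exact zero_mem _
      · intro x y _ _ hx hy; exact add_mem hx hy
      · intro x y _ _ hx hy
        refine Submodule.iSup_induction N (motive := fun x => x * y ∈ ⨆ p, N p) hx ?_ ?_ ?_
        · intro i x hxi
          refine Submodule.iSup_induction N (motive := fun y => x * y ∈ ⨆ p, N p) hy ?_ ?_ ?_
          · intro j y hyj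
            exact Submodule.mem_iSup_of_mem (i + j) (hmulN i x hxi j y hyj)
          · show x * 0 ∈ ⨆ p, N p
            rw [mul_zero]; exact zero_mem _
          · intro a b ha hb
            show x * (a + b) ∈ ⨆ p, N p
            rw [mul_add]; exact add_mem ha hb
        · show (0 : W) * y ∈ ⨆ p, N p
          rw [zero_mul]; exact zero_mem _
        · intro a b ha hb
          show (a + b) * y ∈ ⨆ p, N p
          rw [add_mul]; exact add_mem ha hb
    intro p x hxp
    have hx' : x ∈ ⨆ p, N p := hNtop ▸ Submodule.mem_top
    have hdec : ∀ m : ℕ, ((DirectSum.decompose 𝒜 x m : 𝒜 m) : W) ∈ N m := by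
      refine Submodule.iSup_induction N
        (motive := fun x => ∀ m : ℕ, ((DirectSum.decompose 𝒜 x m : 𝒜 m) : W) ∈ N m) hx' ?_ ?_ ?_
      · intro i z hz m
        rcases eq_or_ne m i with rfl | hne
        · rw [DirectSum.decompose_of_mem_same 𝒜 (hmemN' m z hz).1]; exact hz
        · rw [DirectSum.decompose_of_mem_ne 𝒜 (hmemN' i z hz).1 (Ne.symm hne)]
          exact zero_mem _
      · intro m
        rw [DirectSum.decompose_zero]
        simp only [DirectSum.zero_apply, ZeroMemClass.coe_zero]
        exact zero_mem _
      · intro a b ha hb m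
        rw [DirectSum.decompose_add, DirectSum.add_apply, Submodule.coe_add]
        exact add_mem (ha m) (hb m)
    have h := (hmemN' p _ (hdec p)).2
    rwa [DirectSum.decompose_of_mem_same 𝒜 hxp] at h
  constructor
  · -- part (i)
    intro p q x y hx hy
    have h1 := stmt11L 𝒜 dia σ hσ hdia (hN p x hx) hy
    have h2 := stmt11L 𝒜 dia σ hσ hdia (hN q y hy) hx
    have hs : ((-1 : k) ^ (p * q)) * ((-1 : k) ^ (q * p)) = 1 := by
      rw [mul_comm q p, ← pow_add, ← two_mul, pow_mul, neg_one_sq, one_pow]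
    rw [hiΘL x y, hiΘL y x, map_add, map_add, h1, h2, smul_add, smul_smul, hs, one_smul,
      add_comm]
  · -- part (ii)
    intro c b Θ₂ hΘ₂ iΘ₂ h0 hd hL
    have hΘ1 : iΘ (1 : W) = 0 := by rw [← map_one ιA]; exact hiΘ0 1
    have hΘ₂1 : iΘ₂ (1 : W) = 0 := by rw [← map_one ιA]; exact h0 1
    have hmap : ∀ t : A ⊗[k] A,
        TensorProduct.map ιA.toLinearMap ιA.toLinearMap
            (((1 : A) ⊗ₜ[k] c) * t * (b ⊗ₜ[k] (1 : A)))
          = ((1 : W) ⊗ₜ[k] ιA c) *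
              TensorProduct.map ιA.toLinearMap ιA.toLinearMap t * (ιA b ⊗ₜ[k] (1 : W)) := by
      intro t
      induction t using TensorProduct.induction_on with
      | zero => simp
      | tmul a₁ a₂ =>
        simp [Algebra.TensorProduct.tmul_mul_tmul, map_mul]
      | add u v hu hv =>
        rw [mul_add, add_mul, map_add, hu, hv, map_add, mul_add, add_mul]
    have key : ∀ ω : W,
        iΘ₂ ω = ((1 : W) ⊗ₜ[k] ιA c) * iΘ ω * (ιA b ⊗ₜ[k] (1 : W)) := by
      intro ω
      have hω : ω ∈ Algebra.adjoin k
          (Set.range (fun a : A => ιA a) ∪ Set.range (fun a : A => d (ιA a))) := by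
        rw [hgen]; trivial
      refine Algebra.adjoin_induction
        (p := fun ω _ => iΘ₂ ω = ((1 : W) ⊗ₜ[k] ιA c) * iΘ ω * (ιA b ⊗ₜ[k] (1 : W)))
        ?_ ?_ ?_ ?_ hω
      · rintro w (⟨a, rfl⟩ | ⟨a, rfl⟩)
        · rw [h0 a, hiΘ0 a, mul_zero, zero_mul]
        · rw [hd a, hiΘd a, hΘ₂ a, hmap]
      · intro r
        rw [Algebra.algebraMap_eq_smul_one, map_smul, map_smul, hΘ1, hΘ₂1]
        simp
      · intro x y _ _ hx hy
        rw [map_add, map_add, hx, hy, mul_add, add_mul]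
      · intro x y _ _ hx hy
        rw [hL x y, hiΘL x y, hx, hy]
        refine stmt11_bimod _ _ _ _ _ _ ?_ ?_
        · rw [Algebra.TensorProduct.tmul_mul_tmul, Algebra.TensorProduct.tmul_mul_tmul,
            one_mul, mul_one, mul_one, one_mul]
        · rw [Algebra.TensorProduct.tmul_mul_tmul, Algebra.TensorProduct.tmul_mul_tmul,
            one_mul, mul_one, mul_one, one_mul]
    have hhom : ∀ (i j : ℕ) (u v : W), u ∈ 𝒜 i → v ∈ 𝒜 j →
        dia ((u * ιA b) ⊗ₜ[k] (ιA c * v)) = ιA c * dia (u ⊗ₜ[k] v) * ιA b := by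
      intro i j u v hu hv
      have hub : u * ιA b ∈ 𝒜 i := by simpa using SetLike.mul_mem_graded hu (hι0 b)
      have hcv : ιA c * v ∈ 𝒜 j := by simpa using SetLike.mul_mem_graded (hι0 c) hv
      rw [hdia i j _ hub _ hcv, hdia i j u hu v hv, mul_smul_comm, smul_mul_assoc]
      congr 1
      rw [mul_assoc (ιA c) v (u * ιA b), ← mul_assoc v u (ιA b),
        ← mul_assoc (ιA c) (v * u) (ιA b)]
    have hpure : ∀ z₁ z₂ : W,
        dia ((z₁ * ιA b) ⊗ₜ[k] (ιA c * z₂)) = ιA c * dia (z₁ ⊗ₜ[k] z₂) * ιA b := by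
      intro z₁
      refine DirectSum.Decomposition.inductionOn 𝒜
        (motive := fun z₁ => ∀ z₂ : W,
          dia ((z₁ * ιA b) ⊗ₜ[k] (ιA c * z₂)) = ιA c * dia (z₁ ⊗ₜ[k] z₂) * ιA b)
        ?_ ?_ ?_ z₁
      · intro z₂; simp
      · intro i u z₂
        refine DirectSum.Decomposition.inductionOn 𝒜
          (motive := fun z₂ =>
            dia (((u : W) * ιA b) ⊗ₜ[k] (ιA c * z₂))
              = ιA c * dia ((u : W) ⊗ₜ[k] z₂) * ιA b)
          ?_ ?_ ?_ z₂
        · simp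
        · intro j v
          exact hhom i j (u : W) (v : W) u.2 v.2
        · intro m m' hm hm'
          rw [mul_add, TensorProduct.tmul_add, TensorProduct.tmul_add, map_add, map_add,
            hm, hm', mul_add, add_mul]
      · intro m m' hm hm' z₂
        rw [add_mul, TensorProduct.add_tmul, TensorProduct.add_tmul, map_add, map_add,
          hm z₂, hm' z₂, mul_add, add_mul]
    have hdia2 : ∀ t : W ⊗[k] W,
        dia (((1 : W) ⊗ₜ[k] ιA c) * t * (ιA b ⊗ₜ[k] (1 : W)))
          = ιA c * dia t * ιA b := by
      intro t
      induction t using TensorProduct.induction_on with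
      | zero => simp
      | add u v hu hv =>
        rw [mul_add, add_mul, map_add, hu, hv, map_add, mul_add, add_mul]
      | tmul z₁ z₂ =>
        rw [Algebra.TensorProduct.tmul_mul_tmul, Algebra.TensorProduct.tmul_mul_tmul,
          one_mul, mul_one]
        exact hpure z₁ z₂
    intro ω
    rw [key ω, hdia2]
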